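/- For every natural number n: P_n(1) = 2^n·E_n, Q_n(1) = S_n, and R_n(1) = 2^n·E_{n+1}, where E_n are the Euler numbers and S_n the Springer numbers. -/

import Mathlib

open Polynomial

/-- The derivative polynomials `P_n`: `P_0 = t`, `P_{n+1} = (1+t²)·P_n'`. -/
noncomputable def polyP : ℕ → Polynomial ℝ
  | 0 => X
  | n + 1 => (1 + X ^ 2) * derivative (polyP n)

/-- The derivative polynomials `Q_n^{(a)}`:
`Q_0^{(a)} = 1`, `Q_{n+1}^{(a)} = (1+t²)·(Q_n^{(a)})' + a·t·Q_n^{(a)}`;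
`Q_n = Q_n^{(1)}` and `R_n = Q_n^{(2)}`. -/
noncomputable def polyQ (a : ℝ) : ℕ → Polynomial ℝ
  | 0 => 1
  | n + 1 => (1 + X ^ 2) * derivative (polyQ a n) + C a * X * polyQ a n

/-- The Euler numbers, `E_n = (d/dz)^n (tan z + sec z) |_{z=0}`. -/
noncomputable def eulerE (n : ℕ) : ℝ :=
  iteratedDeriv n (fun z => Real.tan z + 1 / Real.cos z) 0

/-- The Springer numbers, `S_n = (d/dz)^n (1/(cos z - sin z)) |_{z=0}`. -/
noncomputable def springerS (n : ℕ) : ℝ :=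
  iteratedDeriv n (fun z => 1 / (Real.cos z - Real.sin z)) 0

lemma keyP {s : Set ℝ} (hs : IsOpen s) {g : ℝ → ℝ} {c : ℝ} (hc : c ≠ 0)
    (hg : ∀ x ∈ s, HasDerivAt g ((1 + g x ^ 2) / c) x) (n : ℕ) :
    ∀ x ∈ s, iteratedDeriv n g x = (polyP n).eval (g x) / c ^ n := by
  induction n with
  | zero => intro x hx; simp [polyP]
  | succ n ih =>
    intro x hx
    rw [iteratedDeriv_succ]
    have hev : iteratedDeriv n g =ᶠ[nhds x] fun y => (polyP n).eval (g y) / c ^ n :=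
      Filter.eventually_of_mem (hs.mem_nhds hx) ih
    rw [hev.deriv_eq]
    have h1 : HasDerivAt (fun y => (polyP n).eval (g y) / c ^ n)
        ((derivative (polyP n)).eval (g x) * ((1 + g x ^ 2) / c) / c ^ n) x :=
      (((polyP n).hasDerivAt (g x)).comp x (hg x hx)).div_const _
    rw [h1.deriv]
    show _ = (polyP (n + 1)).eval (g x) / c ^ (n + 1)
    simp only [polyP, eval_mul, eval_add, eval_one, eval_pow, eval_X]
    field_simp
    ring

lemma keyQ {s : Set ℝ} (hs : IsOpen s) {g F : ℝ → ℝ} {a : ℝ}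
    (hg : ∀ x ∈ s, HasDerivAt g (1 + g x ^ 2) x)
    (hF : ∀ x ∈ s, HasDerivAt F (a * g x * F x) x) (n : ℕ) :
    ∀ x ∈ s, iteratedDeriv n F x = (polyQ a n).eval (g x) * F x := by
  induction n with
  | zero => intro x hx; simp [polyQ]
  | succ n ih =>
    intro x hx
    rw [iteratedDeriv_succ]
    have hev : iteratedDeriv n F =ᶠ[nhds x] fun y => (polyQ a n).eval (g y) * F y :=
      Filter.eventually_of_mem (hs.mem_nhds hx) ih
    rw [hev.deriv_eq]
    have h1 : HasDerivAt (fun y => (polyQ a n).eval (g y) * F y)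
        ((derivative (polyQ a n)).eval (g x) * (1 + g x ^ 2) * F x
          + (polyQ a n).eval (g x) * (a * g x * F x)) x :=
      (((polyQ a n).hasDerivAt (g x)).comp x (hg x hx)).mul (hF x hx)
    rw [h1.deriv]
    show _ = (polyQ a (n + 1)).eval (g x) * F x
    simp only [polyQ, eval_mul, eval_add, eval_one, eval_pow, eval_X, eval_C]
    ring

lemma polyPR (n : ℕ) : polyP (n + 1) = (1 + X ^ 2) * polyQ 2 n := by
  induction n with
  | zero => simp [polyP, polyQ]
  | succ n ih =>
    show (1 + X ^ 2) * derivative (polyP (n + 1)) = _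
    rw [ih]
    show _ = (1 + X ^ 2) * ((1 + X ^ 2) * derivative (polyQ 2 n) + C 2 * X * polyQ 2 n)
    rw [derivative_mul]
    have : derivative ((1 : Polynomial ℝ) + X ^ 2) = C 2 * X := by
      simp [derivative_pow]
    rw [this]
    ring

lemma hasDerivAt_f {z : ℝ} (h : Real.cos z ≠ 0) :
    HasDerivAt (fun z => Real.tan z + 1 / Real.cos z)
      ((1 + (Real.tan z + 1 / Real.cos z) ^ 2) / 2) z := by
  have h1 := Real.hasDerivAt_tan h
  have h2 : HasDerivAt (fun z => 1 / Real.cos z) (Real.sin z / Real.cos z ^ 2) z := by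
    simpa [one_div, neg_div, neg_neg] using (Real.hasDerivAt_cos z).fun_inv h
  have h3 := h1.fun_add h2
  refine h3.congr_deriv ?_
  have hs := Real.sin_sq_add_cos_sq z
  rw [Real.tan_eq_sin_div_cos]
  field_simp [Real.tan_eq_sin_div_cos]
  nlinarith [hs]

lemma hasDerivAt_u {z : ℝ} (h : Real.cos z - Real.sin z ≠ 0) :
    HasDerivAt (fun z => (Real.cos z + Real.sin z) / (Real.cos z - Real.sin z))
      (1 + ((Real.cos z + Real.sin z) / (Real.cos z - Real.sin z)) ^ 2) z := by
  have h1 := (Real.hasDerivAt_cos z).fun_add (Real.hasDerivAt_sin z)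
  have h2 := (Real.hasDerivAt_cos z).fun_sub (Real.hasDerivAt_sin z)
  have h3 := h1.fun_div h2 h
  refine h3.congr_deriv ?_
  have hs := Real.sin_sq_add_cos_sq z
  field_simp
  nlinarith [hs]

lemma hasDerivAt_hh {z : ℝ} (h : Real.cos z - Real.sin z ≠ 0) :
    HasDerivAt (fun z => 1 / (Real.cos z - Real.sin z))
      (1 * ((Real.cos z + Real.sin z) / (Real.cos z - Real.sin z))
        * (1 / (Real.cos z - Real.sin z))) z := by
  have h2 := (Real.hasDerivAt_cos z).fun_sub (Real.hasDerivAt_sin z)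
  have h4 : HasDerivAt (fun z => 1 / (Real.cos z - Real.sin z))
      (-(-Real.sin z - Real.cos z) / (Real.cos z - Real.sin z) ^ 2) z := by
    simpa [one_div] using h2.fun_inv h
  convert h4 using 1
  field_simp
  ring

theorem stmt5 (n : ℕ) :
    (polyP n).eval 1 = 2 ^ n * eulerE n ∧
    (polyQ 1 n).eval 1 = springerS n ∧
    (polyQ 2 n).eval 1 = 2 ^ n * eulerE (n + 1) := by
  have hs1 : IsOpen {z : ℝ | Real.cos z ≠ 0} :=
    isOpen_compl_singleton.preimage Real.continuous_cos
  have hs2 : IsOpen {z : ℝ | Real.cos z - Real.sin z ≠ 0} :=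
    isOpen_compl_singleton.preimage (Real.continuous_cos.sub Real.continuous_sin)
  have h01 : (0 : ℝ) ∈ {z : ℝ | Real.cos z ≠ 0} := by simp
  have h02 : (0 : ℝ) ∈ {z : ℝ | Real.cos z - Real.sin z ≠ 0} := by simp
  have hP : ∀ m : ℕ, (polyP m).eval 1 = 2 ^ m * eulerE m := by
    intro m
    have e1 := keyP hs1 two_ne_zero (fun x hx => hasDerivAt_f hx) m 0 h01
    simp only [Real.tan_zero, Real.cos_zero, div_one, zero_add] at e1
    rw [eulerE, e1]
    field_simp
  refine ⟨hP n, ?_, ?_⟩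
  · have e2 := keyQ hs2 (fun x hx => hasDerivAt_u hx) (fun x hx => hasDerivAt_hh hx) n 0 h02
    simp only [Real.cos_zero, Real.sin_zero, sub_zero, add_zero, div_one, mul_one] at e2
    rw [springerS, e2]
  · have := polyPR n
    have e3 : (polyP (n + 1)).eval 1 = 2 * (polyQ 2 n).eval 1 := by
      rw [this]; simp only [eval_mul, eval_add, eval_one, eval_pow, eval_X]; norm_num
    have := hP (n + 1)
    rw [e3, pow_succ] at this
    linarith [this]
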